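/- arXiv:1512.03823 — 3 statements merged into one kernel-verified Lean document; each statement's English description precedes it below -/
import Mathlib

section
/- A passive state minimizes energy in its unitary orbit: if ρ is a density matrix diagonal in the eigenbasis of a Hermitian H with eigenvalue populations non-increasing in energy (i.e., ⟨E_k|ρ|E_k⟩ ≥ ⟨E_l|ρ|E_l⟩ whenever E_k ≤ E_l), then for every unitary U, Tr(H U ρ U†) ≥ Tr(H ρ). -/
open Matrix Filter Topology

noncomputable def vnEntropy {n : Type*} [Fintype n] [DecidableEq n] (ρ : Matrix n n ℂ) : ℝ :=
  if h : ρ.IsHermitian then -∑ i, h.eigenvalues i * Real.log (h.eigenvalues i) else 0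

/-- Key inequality: for a doubly stochastic matrix `D` and antivarying `f`, `g`,
`∑ f k * g k ≤ ∑∑ D k l * (f k * g l)`. -/
lemma key_ds {d : ℕ} (D : Matrix (Fin d) (Fin d) ℝ)
    (hD : D ∈ doublyStochastic ℝ (Fin d)) (f g : Fin d → ℝ) (hA : Antivary f g) :
    ∑ k, f k * g k ≤ ∑ k, ∑ l, D k l * (f k * g l) := by
  obtain ⟨w, hw0, hw1, hwD⟩ := exists_eq_sum_perm_of_mem_doublyStochastic hD
  have hD' : ∀ k l, D k l = ∑ σ : Equiv.Perm (Fin d), w σ * (if σ k = l then 1 else 0) := by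
    intro k l
    rw [← hwD]
    simp [Finset.sum_apply, Matrix.sum_apply, Equiv.Perm.permMatrix,
      PEquiv.toMatrix_apply, Equiv.toPEquiv_apply]
  have hrhs : ∑ k, ∑ l, D k l * (f k * g l)
      = ∑ σ : Equiv.Perm (Fin d), w σ * ∑ k, f k * g (σ k) := by
    calc ∑ k, ∑ l, D k l * (f k * g l)
        = ∑ k, ∑ σ : Equiv.Perm (Fin d), w σ * (f k * g (σ k)) := by
          refine Finset.sum_congr rfl fun k _ => ?_
          calc ∑ l, D k l * (f k * g l)
              = ∑ l, ∑ σ : Equiv.Perm (Fin d),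
                  (w σ * if σ k = l then 1 else 0) * (f k * g l) := by
                simp_rw [hD', Finset.sum_mul]
            _ = ∑ σ : Equiv.Perm (Fin d), ∑ l,
                  (w σ * if σ k = l then 1 else 0) * (f k * g l) := Finset.sum_comm
            _ = ∑ σ : Equiv.Perm (Fin d), w σ * (f k * g (σ k)) := by
                refine Finset.sum_congr rfl fun σ _ => ?_
                simp [mul_ite, ite_mul, Finset.sum_ite_eq]
      _ = ∑ σ : Equiv.Perm (Fin d), ∑ k, w σ * (f k * g (σ k)) := Finset.sum_comm
      _ = ∑ σ : Equiv.Perm (Fin d), w σ * ∑ k, f k * g (σ k) := by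
          simp_rw [Finset.mul_sum]
  rw [hrhs]
  calc ∑ k, f k * g k = ∑ σ : Equiv.Perm (Fin d), w σ * ∑ k, f k * g k := by
        rw [← Finset.sum_mul, hw1, one_mul]
    _ ≤ ∑ σ : Equiv.Perm (Fin d), w σ * ∑ k, f k * g (σ k) := by
        refine Finset.sum_le_sum fun σ _ => ?_
        exact mul_le_mul_of_nonneg_left (hA.sum_mul_le_sum_mul_comp_perm) (hw0 σ)

/-- A passive state minimizes energy in its unitary orbit. -/
theorem passive_min_energy_unitary_orbit {d : ℕ}
    (H : Matrix (Fin d) (Fin d) ℂ) (hH : H.IsHermitian)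
    (v : Fin d → Fin d → ℂ) (E : Fin d → ℝ)
    (hon : ∀ k l, star (v k) ⬝ᵥ v l = if k = l then 1 else 0)
    (heig : ∀ k, H.mulVec (v k) = (E k : ℂ) • v k)
    (p : Fin d → ℝ) (hp0 : ∀ k, 0 ≤ p k) (hp1 : ∑ k, p k = 1)
    (ρ : Matrix (Fin d) (Fin d) ℂ)
    (hρ : ρ = ∑ k, (p k : ℂ) • Matrix.vecMulVec (v k) (star (v k)))
    (hpassive : ∀ k l, E k ≤ E l → p l ≤ p k)
    (U : Matrix (Fin d) (Fin d) ℂ) (hU : U ∈ Matrix.unitaryGroup (Fin d) ℂ) :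
    (H * ρ).trace.re ≤ (H * (U * ρ * star U)).trace.re := by
  classical
  set Ec : Fin d → ℂ := fun k => (E k : ℂ) with hEc
  set Pc : Fin d → ℂ := fun k => (p k : ℂ) with hPc
  -- the matrix whose columns are the eigenvectors
  set W : Matrix (Fin d) (Fin d) ℂ := Matrix.of (fun i k => v k i) with hWdef
  have hWH : Wᴴ * W = 1 := by
    ext k l
    have := hon k l
    simpa [Matrix.mul_apply, Matrix.conjTranspose_apply, Matrix.one_apply, hWdef,
      dotProduct, Pi.star_apply] using this
  have hWW : W * Wᴴ = 1 := mul_eq_one_comm.mp hWH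
  have hHW : H * W = W * Matrix.diagonal Ec := by
    ext i k
    have h1 : ∑ j, H i j * v k j = (E k : ℂ) * v k i := by
      have := congrFun (heig k) i
      simpa [Matrix.mulVec, dotProduct] using this
    rw [Matrix.mul_diagonal, Matrix.mul_apply]
    show ∑ j, H i j * v k j = v k i * Ec k
    rw [h1, hEc, mul_comm]
  have hH' : H = W * Matrix.diagonal Ec * Wᴴ := by
    rw [← hHW, Matrix.mul_assoc, hWW, Matrix.mul_one]
  have hρ' : ρ = W * Matrix.diagonal Pc * Wᴴ := by
    rw [hρ]
    ext i j
    simp [Matrix.sum_apply, Matrix.mul_apply, Matrix.diagonal, Matrix.conjTranspose_apply,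
      Matrix.vecMulVec_apply, hWdef, hPc, Finset.sum_mul, mul_comm, mul_assoc, mul_left_comm]
  have hUU' : U * Uᴴ = 1 := by
    have := (Matrix.mem_unitaryGroup_iff).mp hU
    simpa [Matrix.star_eq_conjTranspose] using this
  have hU'U : Uᴴ * U = 1 := mul_eq_one_comm.mp hUU'
  set X : Matrix (Fin d) (Fin d) ℂ := Wᴴ * U * W with hXdef
  have hXH : Xᴴ = Wᴴ * Uᴴ * W := by
    simp [hXdef, Matrix.conjTranspose_mul, Matrix.mul_assoc]
  have hXX : X * Xᴴ = 1 := by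
    rw [hXdef, hXH]
    calc Wᴴ * U * W * (Wᴴ * Uᴴ * W)
        = Wᴴ * U * ((W * Wᴴ) * (Uᴴ * W)) := by simp only [Matrix.mul_assoc]
      _ = 1 := by
          rw [hWW, one_mul, Matrix.mul_assoc, ← Matrix.mul_assoc U Uᴴ W, hUU',
            one_mul, hWH]
  have hXX' : Xᴴ * X = 1 := mul_eq_one_comm.mp hXX
  -- trace conjugation lemma
  have tr_conj : ∀ A : Matrix (Fin d) (Fin d) ℂ, (W * A * Wᴴ).trace = A.trace := by
    intro A
    rw [Matrix.trace_mul_comm, ← Matrix.mul_assoc, hWH, one_mul]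
  -- LHS trace
  have hLHS : (H * ρ).trace = ∑ k, Ec k * Pc k := by
    have h1 : H * ρ = W * (Matrix.diagonal Ec * Matrix.diagonal Pc) * Wᴴ := by
      rw [hH', hρ']
      simp only [Matrix.mul_assoc]
      rw [← Matrix.mul_assoc Wᴴ W (Matrix.diagonal Pc * Wᴴ), hWH, one_mul]
    rw [h1, tr_conj, Matrix.diagonal_mul_diagonal, Matrix.trace_diagonal]
  -- RHS trace
  have hRHS : (H * (U * ρ * star U)).trace
      = (Matrix.diagonal Ec * X * Matrix.diagonal Pc * Xᴴ).trace := by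
    have h1 : H * (U * ρ * star U)
        = W * (Matrix.diagonal Ec * X * Matrix.diagonal Pc * Xᴴ) * Wᴴ := by
      rw [hH', hρ', Matrix.star_eq_conjTranspose, hXH, hXdef]
      simp only [Matrix.conjTranspose_mul, Matrix.conjTranspose_conjTranspose,
        Matrix.mul_assoc, hWW, hWH, Matrix.mul_one, Matrix.one_mul]
    rw [h1, tr_conj]
  -- entrywise expansion of the RHS trace
  have hRHS2 : (Matrix.diagonal Ec * X * Matrix.diagonal Pc * Xᴴ).trace
      = ∑ k, ∑ l, Ec k * (Pc l * (X k l * (starRingEnd ℂ) (X k l))) := by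
    have hdiag : ∀ k, (Matrix.diagonal Ec * X * Matrix.diagonal Pc * Xᴴ) k k
        = ∑ l, Ec k * (Pc l * (X k l * (starRingEnd ℂ) (X k l))) := by
      intro k
      rw [Matrix.mul_apply]
      refine Finset.sum_congr rfl fun l _ => ?_
      rw [Matrix.mul_diagonal, Matrix.diagonal_mul, Matrix.conjTranspose_apply]
      have : star (X k l) = (starRingEnd ℂ) (X k l) := rfl
      rw [this]
      ring
    simp only [Matrix.trace, Matrix.diag]
    exact Finset.sum_congr rfl fun k _ => hdiag k
  -- the doubly stochastic matrix
  set D : Matrix (Fin d) (Fin d) ℝ := fun k l => Complex.normSq (X k l) with hDdef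
  have hDval : ∀ k l, X k l * (starRingEnd ℂ) (X k l) = (D k l : ℂ) := by
    intro k l; rw [Complex.mul_conj]
  have hrow : ∀ k, ∑ l, D k l = 1 := by
    intro k
    have h1 : (X * Xᴴ) k k = (1 : Matrix (Fin d) (Fin d) ℂ) k k := by rw [hXX]
    rw [Matrix.mul_apply] at h1
    simp only [Matrix.conjTranspose_apply, Matrix.one_apply_eq] at h1
    have h2 : ∑ l, (D k l : ℂ) = 1 := by
      rw [← h1]
      refine Finset.sum_congr rfl fun l _ => ?_
      rw [← hDval k l]
      simp [Complex.star_def]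
    exact_mod_cast h2
  have hcol : ∀ l, ∑ k, D k l = 1 := by
    intro l
    have h1 : (Xᴴ * X) l l = (1 : Matrix (Fin d) (Fin d) ℂ) l l := by rw [hXX']
    rw [Matrix.mul_apply] at h1
    simp only [Matrix.conjTranspose_apply, Matrix.one_apply_eq] at h1
    have h2 : ∑ k, (D k l : ℂ) = 1 := by
      rw [← h1]
      refine Finset.sum_congr rfl fun k _ => ?_
      rw [← hDval k l]
      simp [Complex.star_def, mul_comm]
    exact_mod_cast h2
  have hDmem : D ∈ doublyStochastic ℝ (Fin d) := by
    rw [mem_doublyStochastic_iff_sum]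
    exact ⟨fun i j => Complex.normSq_nonneg _, hrow, hcol⟩
  -- real parts
  have hLre : (H * ρ).trace.re = ∑ k, E k * p k := by
    rw [hLHS, Complex.re_sum]
    refine Finset.sum_congr rfl fun k _ => ?_
    rw [hEc, hPc]
    rw [← Complex.ofReal_mul, Complex.ofReal_re]
  have hRre : (H * (U * ρ * star U)).trace.re = ∑ k, ∑ l, D k l * (E k * p l) := by
    rw [hRHS, hRHS2, Complex.re_sum]
    refine Finset.sum_congr rfl fun k _ => ?_
    rw [Complex.re_sum]
    refine Finset.sum_congr rfl fun l _ => ?_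
    rw [hDval k l, hEc, hPc]
    have : ((E k : ℂ)) * ((p l : ℂ) * (D k l : ℂ)) = ((D k l * (E k * p l) : ℝ) : ℂ) := by
      push_cast; ring
    rw [this, Complex.ofReal_re]
  rw [hLre, hRre]
  -- antivariance
  have hA : Antivary E p := by
    intro i j hij
    by_contra h
    push_neg at h
    exact absurd (hpassive i j (le_of_lt h)) (not_le.mpr hij)
  exact key_ds D hDmem E p hA
end

section
/- Every Gibbs state at positive inverse temperature is passive: for any Hermitian H and β > 0, the state ω = e^{-βH}/Tr(e^{-βH}) satisfies Tr(H U ω U†) ≥ Tr(H ω) for all unitaries U. -/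
open Matrix Filter Topology

lemma key_scalar (β a b : ℝ) :
    0 ≤ Real.exp (-(β*b)) * ((a - b) * β) + (Real.exp (-(β*a)) - Real.exp (-(β*b))) := by
  have h := Real.add_one_le_exp (-(β*(a-b)))
  have h2 : Real.exp (-(β*a)) = Real.exp (-(β*b)) * Real.exp (-(β*(a-b))) := by
    rw [← Real.exp_add]; ring_nf
  nlinarith [Real.exp_pos (-(β*b))]

lemma sum_ineq {n : Type*} [Fintype n] (P : n → n → ℝ) (lam mu : n → ℝ) (β : ℝ) (hβ : 0 < β)
    (hrow : ∀ i, ∑ j, P i j = 1) (hcol : ∀ j, ∑ i, P i j = 1)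
    (hkey : ∀ i j, 0 ≤ P i j * (mu j * (lam i - lam j) + (mu i - mu j)/β)) :
    ∑ i, lam i * mu i ≤ ∑ i, ∑ j, P i j * (lam i * mu j) := by
  have hA : ∑ i, ∑ j, P i j * mu i = ∑ i, mu i := by
    simp_rw [← Finset.sum_mul]
    simp [hrow]
  have hB : ∑ i, ∑ j, P i j * mu j = ∑ j, mu j := by
    rw [Finset.sum_comm]
    simp_rw [← Finset.sum_mul]
    simp [hcol]
  have hC : ∑ i, ∑ j, P i j * (lam j * mu j) = ∑ i, lam i * mu i := by
    rw [Finset.sum_comm]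
    simp_rw [← Finset.sum_mul]
    simp [hcol]
  have hmain : 0 ≤ ∑ i, ∑ j, P i j * (mu j * (lam i - lam j) + (mu i - mu j)/β) :=
    Finset.sum_nonneg fun i _ => Finset.sum_nonneg fun j _ => hkey i j
  have expand : ∑ i, ∑ j, P i j * (mu j * (lam i - lam j) + (mu i - mu j)/β)
      = (∑ i, ∑ j, P i j * (lam i * mu j)) - (∑ i, ∑ j, P i j * (lam j * mu j))
        + ((∑ i, ∑ j, P i j * mu i) - (∑ i, ∑ j, P i j * mu j))/β := by
    have : ∀ i j : n, P i j * (mu j * (lam i - lam j) + (mu i - mu j)/β)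
        = P i j * (lam i * mu j) - P i j * (lam j * mu j) + (P i j * mu i - P i j * mu j)/β := by
      intro i j; ring
    simp_rw [this]
    simp only [sub_div, Finset.sum_add_distrib, Finset.sum_sub_distrib, Finset.sum_div]
  rw [expand, hA, hB, hC, sub_self, zero_div, add_zero] at hmain
  linarith


noncomputable def gibbs {d : ℕ} (H : Matrix (Fin d) (Fin d) ℂ) (β : ℝ) : Matrix (Fin d) (Fin d) ℂ :=
  (Matrix.trace (NormedSpace.exp ((-β : ℂ) • H)))⁻¹ • NormedSpace.exp ((-β : ℂ) • H)

lemma gibbs_passive_aux {d : ℕ} (hd : 0 < d)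
    (H : Matrix (Fin d) (Fin d) ℂ) (hH : H.IsHermitian) (β : ℝ) (hβ : 0 < β)
    (U : Matrix (Fin d) (Fin d) ℂ) (hU : U ∈ Matrix.unitaryGroup (Fin d) ℂ) :
    (H * gibbs H β).trace.re ≤ (H * (U * gibbs H β * star U)).trace.re := by
  classical
  haveI : NeZero d := ⟨hd.ne'⟩
  set lam : Fin d → ℝ := hH.eigenvalues with hlam
  set V : Matrix (Fin d) (Fin d) ℂ := (hH.eigenvectorUnitary : Matrix (Fin d) (Fin d) ℂ) with hVdef
  have hV : V ∈ Matrix.unitaryGroup (Fin d) ℂ := (hH.eigenvectorUnitary).2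
  have hVs : star V * V = 1 := hV.1
  have hVs' : V * star V = 1 := hV.2
  haveI : Invertible V := invertibleOfLeftInverse _ _ hVs
  have hVunit : IsUnit V := isUnit_of_invertible V
  have hinv : V⁻¹ = star V := Matrix.inv_eq_left_inv hVs
  have hspec : H = V * diagonal (fun i => (lam i : ℂ)) * star V := by
    have := hH.spectral_theorem
    rw [Unitary.conjStarAlgAut_apply] at this
    exact this
  set Zr : ℝ := ∑ i, Real.exp (-(β * lam i)) with hZr
  have hZpos : 0 < Zr := Finset.sum_pos (fun i _ => Real.exp_pos _) Finset.univ_nonempty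
  set mu : Fin d → ℝ := fun i => Real.exp (-(β * lam i)) / Zr with hmu
  have hexp : NormedSpace.exp ((-β : ℂ) • H)
      = V * diagonal (fun i => ((Real.exp (-(β * lam i)) : ℝ) : ℂ)) * star V := by
    have h1 : (-β : ℂ) • H = V * diagonal (fun i => ((-(β * lam i) : ℝ) : ℂ)) * V⁻¹ := by
      rw [hinv]
      conv_lhs => rw [hspec]
      have hd2 : (fun i => ((-(β * lam i) : ℝ) : ℂ)) = (-β : ℂ) • (fun i => ((lam i : ℝ) : ℂ)) := by
        funext i; simp only [Pi.smul_apply, smul_eq_mul]; push_cast; ring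
      rw [hd2, diagonal_smul, Matrix.mul_smul, Matrix.smul_mul]
    have hfun : (NormedSpace.exp fun i => ((-(β * lam i) : ℝ) : ℂ))
        = fun i => ((Real.exp (-(β * lam i)) : ℝ) : ℂ) := by
      funext i
      rw [Pi.coe_exp, ← Complex.exp_eq_exp_ℂ]
      exact (Complex.ofReal_exp _).symm
    rw [h1, Matrix.exp_conj V _ hVunit, Matrix.exp_diagonal, hinv, hfun]
  have htrZ : (NormedSpace.exp ((-β : ℂ) • H)).trace = (Zr : ℂ) := by
    rw [hexp, Matrix.trace_mul_cycle, hVs, one_mul, trace_diagonal, hZr]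
    push_cast
    rfl
  have hgibbs : gibbs H β = V * diagonal (fun i => (mu i : ℂ)) * star V := by
    have hdm : ((Zr : ℂ)⁻¹ • fun i => ((Real.exp (-(β * lam i)) : ℝ) : ℂ))
        = fun i => ((mu i : ℝ) : ℂ) := by
      funext i
      simp only [Pi.smul_apply, smul_eq_mul, hmu]
      push_cast
      ring
    rw [gibbs, htrZ, hexp, ← Matrix.smul_mul, ← Matrix.mul_smul, ← diagonal_smul, hdm]
  have hlmul : ∀ X : Matrix (Fin d) (Fin d) ℂ, star V * (V * X) = X := fun X => by
    rw [← mul_assoc, hVs, one_mul]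
  have hlmul' : ∀ X : Matrix (Fin d) (Fin d) ℂ, V * (star V * X) = X := fun X => by
    rw [← mul_assoc, hVs', one_mul]
  have conj_mul : ∀ A B : Matrix (Fin d) (Fin d) ℂ,
      (V * A * star V) * (V * B * star V) = V * (A * B) * star V := by
    intro A B
    simp only [mul_assoc]
    rw [hlmul]
  have hL : (H * gibbs H β).trace = ((∑ i, lam i * mu i : ℝ) : ℂ) := by
    conv_lhs => rw [hgibbs, hspec]
    rw [conj_mul, Matrix.trace_mul_cycle, ← mul_assoc, hVs, one_mul, diagonal_mul_diagonal,
      trace_diagonal]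
    push_cast
    rfl
  set W : Matrix (Fin d) (Fin d) ℂ := star V * U * V with hWdef
  have hWmem : W ∈ Matrix.unitaryGroup (Fin d) ℂ :=
    mul_mem (mul_mem (Unitary.star_mem hV) hU) hV
  have hW1 : star W * W = 1 := hWmem.1
  have hW2 : W * star W = 1 := hWmem.2
  have hWstar : star W = star V * star U * V := by
    rw [hWdef]
    simp only [StarMul.star_mul, star_star]
    rw [mul_assoc]
  have hconjU : U * (V * diagonal (fun i => (mu i : ℂ)) * star V) * star U
      = V * (W * diagonal (fun i => (mu i : ℂ)) * star W) * star V := by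
    rw [hWstar, hWdef]
    simp only [mul_assoc]
    rw [hlmul', hVs', mul_one]
  have hR0 : (H * (U * gibbs H β * star U)).trace
      = ∑ i, ∑ j, ((Complex.normSq (W i j) * (lam i * mu j) : ℝ) : ℂ) := by
    conv_lhs => rw [hgibbs, hspec]
    rw [hconjU, conj_mul, Matrix.trace_mul_cycle, ← mul_assoc, hVs, one_mul]
    have hshape : diagonal (fun i => (lam i : ℂ)) * (W * diagonal (fun i => (mu i : ℂ)) * star W)
        = (diagonal (fun i => (lam i : ℂ)) * W * diagonal (fun i => (mu i : ℂ))) * star W := by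
      simp only [mul_assoc]
    rw [hshape, Matrix.trace]
    apply Finset.sum_congr rfl
    intro i _
    simp only [Matrix.diag_apply]
    rw [Matrix.mul_apply]
    apply Finset.sum_congr rfl
    intro j _
    rw [Matrix.mul_diagonal, Matrix.diagonal_mul, Matrix.star_apply, Complex.star_def]
    push_cast
    rw [← Complex.mul_conj]
    ring
  have hR : (H * (U * gibbs H β * star U)).trace
      = ((∑ i, ∑ j, Complex.normSq (W i j) * (lam i * mu j) : ℝ) : ℂ) := by
    rw [hR0]; push_cast; rfl
  have hrow : ∀ i, ∑ j, Complex.normSq (W i j) = 1 := by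
    intro i
    have h := congr_fun (congr_fun hW2 i) i
    simp only [Matrix.mul_apply, Matrix.star_apply, Matrix.one_apply_eq, RCLike.star_def,
      Complex.mul_conj] at h
    have h2 : ((∑ j, Complex.normSq (W i j) : ℝ) : ℂ) = ((1 : ℝ) : ℂ) := by push_cast; rw [h]
    exact_mod_cast h2
  have hcol : ∀ j, ∑ i, Complex.normSq (W i j) = 1 := by
    intro j
    have h := congr_fun (congr_fun hW1 j) j
    simp only [Matrix.mul_apply, Matrix.star_apply, Matrix.one_apply_eq, RCLike.star_def] at h
    have h' : ∑ i, ((Complex.normSq (W i j) : ℝ) : ℂ) = 1 := by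
      rw [← h]
      apply Finset.sum_congr rfl
      intro i _
      rw [mul_comm, Complex.mul_conj]
    have h2 : ((∑ i, Complex.normSq (W i j) : ℝ) : ℂ) = ((1 : ℝ) : ℂ) := by push_cast at h' ⊢; rw [h']
    exact_mod_cast h2
  have hkey : ∀ i j, 0 ≤ Complex.normSq (W i j)
      * (mu j * (lam i - lam j) + (mu i - mu j)/β) := by
    intro i j
    apply mul_nonneg (Complex.normSq_nonneg _)
    have h := key_scalar β (lam i) (lam j)
    have heq : mu j * (lam i - lam j) + (mu i - mu j)/β
        = (Real.exp (-(β * lam j)) * ((lam i - lam j) * β)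
          + (Real.exp (-(β * lam i)) - Real.exp (-(β * lam j)))) / (Zr * β) := by
      simp only [hmu]
      field_simp
    rw [heq]
    exact div_nonneg h (le_of_lt (mul_pos hZpos hβ))
  rw [hL, hR, Complex.ofReal_re, Complex.ofReal_re]
  exact sum_ineq (fun i j => Complex.normSq (W i j)) lam mu β hβ hrow hcol hkey

/-- Every Gibbs state at positive inverse temperature is passive. -/
theorem gibbs_is_passive {d : ℕ}
    (H : Matrix (Fin d) (Fin d) ℂ) (hH : H.IsHermitian) (β : ℝ) (hβ : 0 < β)
    (U : Matrix (Fin d) (Fin d) ℂ) (hU : U ∈ Matrix.unitaryGroup (Fin d) ℂ) :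
    (H * gibbs H β).trace.re ≤ (H * (U * gibbs H β * star U)).trace.re := by
  rcases Nat.eq_zero_or_pos d with rfl | hd
  · simp [Matrix.trace]
  · exact gibbs_passive_aux hd H hH β hβ U hU
end

section
/- Non-passivity example for GGE-ordered fermionic states: for the three-mode free-fermion Hamiltonian with mode energies ε_1 = 1, ε_2 = 2, ε_3 = 2.5 and product state with mode populations p_1 = 0.4, p_2 = 0.3, p_3 = 0.1 (8×8 diagonal density matrix whose eigenvalue on the occupation pattern s ∈ {0,1}³ is Π_i p_i^{s_i}(1−p_i)^{1−s_i}, with energy Σ_i s_i ε_i), the mode populations are decreasing with increasing mode energy, yet the state is not passive: there exist two occupation patterns s, s' with Σ_i s_i ε_i < Σ_i s'_i ε_i but eigenvalue(s) < eigenvalue(s'). -/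
/-- Non-passivity example for GGE-ordered fermionic states: with mode energies
ε = (1, 2, 2.5) and mode populations p = (0.4, 0.3, 0.1), the populations decrease with
increasing mode energy, yet the resulting 8-level diagonal state is not passive. -/
theorem gge_ordered_not_passive :
    let ε : Fin 3 → ℝ := ![1, 2, 2.5]
    let p : Fin 3 → ℝ := ![0.4, 0.3, 0.1]
    let E : (Fin 3 → Bool) → ℝ := fun s => ∑ i, if s i then ε i else 0
    let q : (Fin 3 → Bool) → ℝ := fun s => ∏ i, if s i then p i else 1 - p i
    (∀ i j : Fin 3, ε i ≤ ε j → p j ≤ p i) ∧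
    ∃ s s' : Fin 3 → Bool, E s < E s' ∧ q s < q s' := by
  intro ε p E q
  refine ⟨fun i j h => ?_, ![false, false, true], ![true, true, false], ?_, ?_⟩
  · fin_cases i <;> fin_cases j <;> simp only [ε, p] at h ⊢ <;>
      norm_num [Matrix.cons_val_zero, Matrix.cons_val_one, Matrix.head_cons] at *
  · simp only [E, ε, Fin.sum_univ_three]; norm_num [Matrix.cons_val_two, Matrix.tail_cons, Matrix.head_cons]
  · simp only [q, p, Fin.prod_univ_three]; norm_num [Matrix.cons_val_two, Matrix.tail_cons, Matrix.head_cons]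
end
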